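/- Non-uniqueness for negative coupling: let ζ ∈ (−1,0) ∪ (0,1) be real and set γ = ζ² − 1 (which is negative). Then the function f(z) = z/(ζ(z−ζ)), defined for z ∈ ℂ∖{ζ}, satisfies the one-soliton pole condition lim_{z→ζ} (z−ζ)·f(z) = −ζγ·f(ζ⁻¹), and moreover f(0) = 0. Consequently the corresponding symmetric vector (f(z), f(1/z)) vanishes in its first component at z = 0 and cannot be normalized to have positive first component there. -/

import Mathlib

open Filter Topology

/-- The resonant function `f(z) = z/(ζ(z-ζ))` appearing in the non-uniqueness example. -/
noncomputable def resonantF (ζ : ℝ) (z : ℂ) : ℂ :=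
  z / ((ζ : ℂ) * (z - (ζ : ℂ)))

/-- Non-uniqueness for negative coupling: for `γ = ζ² - 1 < 0` the function
`f(z) = z/(ζ(z-ζ))` satisfies the one-soliton pole condition
`lim_{z→ζ} (z-ζ) f(z) = -ζ γ f(ζ⁻¹)` and `f(0) = 0`, so the symmetric vector
`(f(z), f(1/z))` vanishes in its first component at `z = 0`. -/
theorem negative_coupling_nonuniqueness (ζ γ : ℝ)
    (hζ : ζ ∈ Set.Ioo (-1 : ℝ) 0 ∪ Set.Ioo (0 : ℝ) 1) (hγ : γ = ζ ^ 2 - 1) :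
    γ < 0 ∧
      Tendsto (fun z : ℂ => (z - (ζ : ℂ)) * resonantF ζ z) (𝓝[≠] (ζ : ℂ))
        (𝓝 (-(ζ : ℂ) * (γ : ℂ) * resonantF ζ ((ζ : ℂ))⁻¹)) ∧
      resonantF ζ 0 = 0 := by
  have hζ0 : ζ ≠ 0 := by
    rcases hζ with h | h
    · exact ne_of_lt h.2
    · exact ne_of_gt h.1
  have hζ1 : ζ ^ 2 < 1 := by
    rcases hζ with h | h
    · nlinarith [h.1, h.2]
    · nlinarith [h.1, h.2]
  have hγneg : γ < 0 := by rw [hγ]; linarith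
  have hζC : (ζ : ℂ) ≠ 0 := by exact_mod_cast hζ0
  have hζ2 : (ζ : ℂ) ^ 2 ≠ 1 := by
    intro h
    have : ζ ^ 2 = 1 := by exact_mod_cast h
    linarith
  -- compute the RHS constant
  have hrhs : -(ζ : ℂ) * (γ : ℂ) * resonantF ζ ((ζ : ℂ))⁻¹ = 1 := by
    have hden : (ζ : ℂ) * (((ζ : ℂ))⁻¹ - (ζ : ℂ)) = 1 - (ζ : ℂ) ^ 2 := by
      field_simp
    have hne : (1 : ℂ) - (ζ : ℂ) ^ 2 ≠ 0 := by
      intro h; apply hζ2; linear_combination -h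
    rw [resonantF, hden, hγ]
    push_cast
    field_simp
    ring
  refine ⟨hγneg, ?_, by simp [resonantF]⟩
  rw [hrhs]
  have heq : ∀ᶠ z in 𝓝[≠] (ζ : ℂ),
      (z - (ζ : ℂ)) * resonantF ζ z = z / (ζ : ℂ) := by
    filter_upwards [self_mem_nhdsWithin] with z hz
    have hz' : z - (ζ : ℂ) ≠ 0 := sub_ne_zero.mpr hz
    rw [resonantF]
    field_simp
  have : Tendsto (fun z : ℂ => z / (ζ : ℂ)) (𝓝[≠] (ζ : ℂ)) (𝓝 1) := by
    have h1 : Tendsto (fun z : ℂ => z / (ζ : ℂ)) (𝓝 (ζ : ℂ)) (𝓝 ((ζ : ℂ) / ζ)) :=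
      (continuous_id.div_const _).tendsto _
    rw [div_self hζC] at h1
    exact h1.mono_left nhdsWithin_le_nhds
  exact this.congr' (heq.mono fun z h => h.symm)
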